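/- arXiv:cs/0503075 — 4 statements merged into one kernel-verified Lean document; each statement's English description precedes it below -/
import Mathlib

section
/- (Existence of positive equilibrium above threshold) If N·k·ρ·Σ_s h(s)·g(s) > 1 and Σ_s h(s)·g(s) > 0 with g(s) > 0 wherever h(s) > 0, then there exists n* > 0 with P̄(n*) = n*/N, where P̄(n) = Σ_s h(s)·(1 − e^{−n·k·ρ·g(s)}). -/
lemma one_sub_exp_neg_ge (x : ℝ) (hx : 0 ≤ x) : x - x^2 ≤ 1 - Real.exp (-x) := by
  have h1 : x + 1 ≤ Real.exp x := Real.add_one_le_exp x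
  have h2 : Real.exp x * Real.exp (-x) = 1 := by
    rw [← Real.exp_add]; simp
  have h3 : (0:ℝ) < Real.exp (-x) := Real.exp_pos _
  have h4 : (0:ℝ) < Real.exp x := Real.exp_pos _
  nlinarith [sq_nonneg x, mul_nonneg hx (sq_nonneg x), sq_nonneg (1 - x),
    mul_pos h3 h4, mul_nonneg (mul_nonneg hx hx) h3.le]

theorem stmt_9 (S : Type*) [Fintype S] [Nonempty S] (h g : S → ℝ) (N k ρ : ℝ)
    (hh : ∀ s, 0 ≤ h s) (hsum : ∑ s, h s = 1) (hg : ∀ s, 0 ≤ g s)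
    (hgh : ∀ s, 0 < h s → 0 < g s)
    (hpos : 0 < ∑ s, h s * g s)
    (hN : 0 < N) (hk : 0 < k) (hρ : 0 < ρ)
    (P : ℝ → ℝ) (hP : ∀ n, P n = ∑ s, h s * (1 - Real.exp (-(n * k * ρ * g s))))
    (hthr : 1 < N * k * ρ * ∑ s, h s * g s) :
    ∃ n : ℝ, 0 < n ∧ P n = n / N := by
  set A : ℝ := ∑ s, h s * g s with hA
  set B : ℝ := ∑ s, h s * g s ^ 2 with hB
  have hB0 : 0 ≤ B := Finset.sum_nonneg fun s _ =>
    mul_nonneg (hh s) (sq_nonneg _)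
  have hkρ : 0 < k * ρ := mul_pos hk hρ
  have hAineq : 1 / N < k * ρ * A := by
    rw [div_lt_iff₀ hN] at *
    nlinarith
  set δ : ℝ := (k * ρ * A - 1 / N) / ((k * ρ)^2 * B + 1) with hδdef
  have hδpos : 0 < δ := by
    apply div_pos (by linarith)
    nlinarith
  -- lower bound: P δ ≥ δ * kρ * A - δ^2 * (kρ)^2 * B
  have hlow : ∀ n : ℝ, 0 ≤ n →
      n * (k * ρ) * A - n^2 * (k * ρ)^2 * B ≤ P n := by
    intro n hn
    rw [hP]
    have : ∀ s : S, h s * (n * k * ρ * g s - (n * k * ρ * g s)^2)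
        ≤ h s * (1 - Real.exp (-(n * k * ρ * g s))) := by
      intro s
      apply mul_le_mul_of_nonneg_left _ (hh s)
      exact one_sub_exp_neg_ge _ (mul_nonneg (mul_nonneg (mul_nonneg hn hk.le) hρ.le) (hg s))
    calc n * (k * ρ) * A - n^2 * (k * ρ)^2 * B
        = ∑ s, h s * (n * k * ρ * g s - (n * k * ρ * g s)^2) := by
          rw [hA, hB, Finset.mul_sum, Finset.mul_sum, ← Finset.sum_sub_distrib]
          apply Finset.sum_congr rfl
          intro s _; ring
      _ ≤ _ := Finset.sum_le_sum fun s _ => this s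
  -- upper bound: P n ≤ 1
  have hup : ∀ n : ℝ, P n ≤ 1 := by
    intro n
    rw [hP, ← hsum]
    apply Finset.sum_le_sum
    intro s _
    nlinarith [(Real.exp_pos (-(n * k * ρ * g s))), hh s,
      mul_nonneg (hh s) (Real.exp_pos (-(n * k * ρ * g s))).le]
  -- continuity
  have hPc : Continuous P := by
    have : P = fun n => ∑ s, h s * (1 - Real.exp (-(n * k * ρ * g s))) :=
      funext hP
    rw [this]; fun_prop
  set F : ℝ → ℝ := fun n => P n - n / N with hF
  have hFc : Continuous F := by fun_prop
  have hFδ : 0 < F δ := by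
    have hl := hlow δ hδpos.le
    have key : δ / N < δ * (k * ρ) * A - δ^2 * (k * ρ)^2 * B := by
      have h1 : δ * ((k * ρ)^2 * B) < δ * ((k * ρ)^2 * B + 1) := by
        nlinarith
      have h2 : δ * ((k * ρ)^2 * B + 1) = k * ρ * A - 1 / N := by
        rw [hδdef]; field_simp
      have h3 : δ * ((k * ρ)^2 * B) < k * ρ * A - 1 / N := by
        rw [← h2]; exact h1
      have : δ * (1 / N) < δ * (k * ρ * A - δ * ((k * ρ)^2 * B)) := by
        apply mul_lt_mul_of_pos_left _ hδpos
        linarith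
      calc δ / N = δ * (1 / N) := by ring
        _ < δ * (k * ρ * A - δ * ((k * ρ)^2 * B)) := this
        _ = δ * (k * ρ) * A - δ^2 * (k * ρ)^2 * B := by ring
    simp only [hF]
    linarith
  set b : ℝ := δ + 2 * N with hb
  have hFb : F b < 0 := by
    have h1 : P b ≤ 1 := hup b
    have h2 : 2 < b / N := by
      rw [lt_div_iff₀ hN]; nlinarith
    simp only [hF]; linarith
  have hδb : δ ≤ b := by nlinarith
  have := intermediate_value_Icc' hδb hFc.continuousOn
  have h0 : (0:ℝ) ∈ Set.Icc (F b) (F δ) := ⟨hFb.le, hFδ.le⟩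
  obtain ⟨n, hn, hn0⟩ := this h0
  refine ⟨n, lt_of_lt_of_le hδpos hn.1, ?_⟩
  have : P n - n / N = 0 := hn0
  linarith
end

section
/- The squared 2-norm of the truncated Zipf distribution, ‖g‖² = (Σ_{s=1}^{s_max} s^{−2β})/(Σ_{s=1}^{s_max} s^{−β})², is strictly increasing in β for fixed s_max ≥ 2. -/
private noncomputable def auxF (a b c d : ℝ) (s t : ℕ) : ℝ :=
  (s:ℝ)^(-a)*(t:ℝ)^(-b) - (s:ℝ)^(-c)*(t:ℝ)^(-d)

private lemma pos_mem {smax s : ℕ} (h : s ∈ Finset.Icc 1 smax) : (0:ℝ) < s := by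
  have h1 := (Finset.mem_Icc.mp h).1
  exact_mod_cast Nat.lt_of_lt_of_le Nat.zero_lt_one h1

private lemma Psum_pos (smax : ℕ) (hs : 2 ≤ smax) (γ : ℝ) :
    0 < ∑ s ∈ Finset.Icc 1 smax, (s:ℝ) ^ (-γ) := by
  apply Finset.sum_pos
  · intro s hsm
    exact Real.rpow_pos_of_pos (pos_mem hsm) _
  · exact ⟨1, Finset.mem_Icc.mpr ⟨le_refl 1, le_trans one_le_two hs⟩⟩

private lemma key (smax : ℕ) (hs : 2 ≤ smax) {a b c d : ℝ} (ha : 0 < a)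
    (hac : a < c) (had : a < d) (habcd : a + b = c + d) :
    (∑ s ∈ Finset.Icc 1 smax, (s:ℝ) ^ (-c)) * (∑ s ∈ Finset.Icc 1 smax, (s:ℝ) ^ (-d))
      < (∑ s ∈ Finset.Icc 1 smax, (s:ℝ) ^ (-a)) * (∑ s ∈ Finset.Icc 1 smax, (s:ℝ) ^ (-b)) := by
  set S := Finset.Icc 1 smax with hS
  -- symmetrization identity
  have hid : ∀ x y : ℝ, 0 < x → 0 < y →
      (x^(-a)*y^(-b) - x^(-c)*y^(-d)) + (y^(-a)*x^(-b) - y^(-c)*x^(-d))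
        = x^(-a) * y^(-a) * ((x^(-(c-a)) - y^(-(c-a))) * ((x^(-(d-a)) - y^(-(d-a))))) := by
    intro x y hx hy
    have eb : ∀ z:ℝ, 0 < z → z ^ (-b) = z^(-a) * (z ^ (-(c-a)) * z ^ (-(d-a))) := by
      intro z hz
      rw [← Real.rpow_add hz, ← Real.rpow_add hz]
      congr 1; linarith
    have ec : ∀ z:ℝ, 0 < z → z^(-c) = z^(-a) * z^(-(c-a)) := by
      intro z hz; rw [← Real.rpow_add hz]; congr 1; ring
    have ed : ∀ z:ℝ, 0 < z → z^(-d) = z^(-a) * z^(-(d-a)) := by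
      intro z hz; rw [← Real.rpow_add hz]; congr 1; ring
    rw [eb _ hx, eb _ hy, ec _ hx, ec _ hy, ed _ hx, ed _ hy]
    ring
  have hsign : ∀ x y : ℝ, 0 < x → 0 < y →
      0 ≤ (x^(-(c-a)) - y^(-(c-a))) * (x^(-(d-a)) - y^(-(d-a))) := by
    intro x y hx hy
    rcases le_total x y with h | h
    · have h1 := Real.rpow_le_rpow_of_nonpos hx h (by linarith : -(c-a) ≤ 0)
      have h2 := Real.rpow_le_rpow_of_nonpos hx h (by linarith : -(d-a) ≤ 0)
      exact mul_nonneg (by linarith) (by linarith)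
    · have h1 := Real.rpow_le_rpow_of_nonpos hy h (by linarith : -(c-a) ≤ 0)
      have h2 := Real.rpow_le_rpow_of_nonpos hy h (by linarith : -(d-a) ≤ 0)
      nlinarith
  have hGnn : ∀ s ∈ S, ∀ t ∈ S, 0 ≤ auxF a b c d s t + auxF a b c d t s := by
    intro s hsm t htm
    have hx := pos_mem hsm; have hy := pos_mem htm
    rw [auxF, auxF, hid _ _ hx hy]
    exact mul_nonneg (mul_nonneg (Real.rpow_pos_of_pos hx _).le
      (Real.rpow_pos_of_pos hy _).le) (hsign _ _ hx hy)
  have h1mem : 1 ∈ S := Finset.mem_Icc.mpr ⟨le_refl 1, le_trans one_le_two hs⟩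
  have h2mem : 2 ∈ S := Finset.mem_Icc.mpr ⟨one_le_two, hs⟩
  have hG12 : 0 < auxF a b c d 1 2 + auxF a b c d 2 1 := by
    simp only [auxF, Nat.cast_one, Nat.cast_ofNat]
    rw [hid _ _ one_pos two_pos]
    have hc : ((2:ℝ))^(-(c-a)) < 1 :=
      Real.rpow_lt_one_of_one_lt_of_neg one_lt_two (by linarith)
    have hd : ((2:ℝ))^(-(d-a)) < 1 :=
      Real.rpow_lt_one_of_one_lt_of_neg one_lt_two (by linarith)
    have := Real.rpow_pos_of_pos (by norm_num : (0:ℝ) < 2) (-a)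
    rw [Real.one_rpow, Real.one_rpow, Real.one_rpow]
    have h5 : 0 < (1 - (2:ℝ)^(-(c-a))) * (1 - (2:ℝ)^(-(d-a))) := mul_pos (by linarith) (by linarith)
    nlinarith
  have hsumpos : 0 < ∑ s ∈ S, ∑ t ∈ S, (auxF a b c d s t + auxF a b c d t s) := by
    apply Finset.sum_pos'
    · intro s hsm
      exact Finset.sum_nonneg fun t htm => hGnn s hsm t htm
    · refine ⟨1, h1mem, Finset.sum_pos' (fun t htm => hGnn 1 h1mem t htm) ⟨2, h2mem, hG12⟩⟩
  have hswap : ∑ s ∈ S, ∑ t ∈ S, auxF a b c d t s = ∑ s ∈ S, ∑ t ∈ S, auxF a b c d s t :=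
    Finset.sum_comm
  have hdouble : ∑ s ∈ S, ∑ t ∈ S, (auxF a b c d s t + auxF a b c d t s)
      = 2 * ∑ s ∈ S, ∑ t ∈ S, auxF a b c d s t := by
    simp only [Finset.sum_add_distrib, hswap]; ring
  have hFpos : 0 < ∑ s ∈ S, ∑ t ∈ S, auxF a b c d s t := by
    rw [hdouble] at hsumpos; linarith
  have hexp : ∑ s ∈ S, ∑ t ∈ S, auxF a b c d s t
      = (∑ s ∈ S, (s:ℝ) ^ (-a)) * (∑ s ∈ S, (s:ℝ) ^ (-b))
        - (∑ s ∈ S, (s:ℝ) ^ (-c)) * (∑ s ∈ S, (s:ℝ) ^ (-d)) := by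
    rw [Finset.sum_mul, Finset.sum_mul, ← Finset.sum_sub_distrib]
    refine Finset.sum_congr rfl fun s hsm => ?_
    rw [Finset.mul_sum, Finset.mul_sum, ← Finset.sum_sub_distrib]
    simp only [auxF]
  rw [hexp] at hFpos
  linarith

theorem stmt_14 (smax : ℕ) (hs : 2 ≤ smax) (β₁ β₂ : ℝ)
    (hβ₁ : 0 < β₁) (hβ₂ : β₁ < β₂) :
    (∑ s ∈ Finset.Icc 1 smax, (s : ℝ) ^ (-(2 * β₁))) /
        (∑ s ∈ Finset.Icc 1 smax, (s : ℝ) ^ (-β₁)) ^ 2 <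
      (∑ s ∈ Finset.Icc 1 smax, (s : ℝ) ^ (-(2 * β₂))) /
        (∑ s ∈ Finset.Icc 1 smax, (s : ℝ) ^ (-β₂)) ^ 2 := by
  set S := Finset.Icc 1 smax with hS
  have hP1 := Psum_pos smax hs β₁
  have hP2 := Psum_pos smax hs β₂
  rw [div_lt_div_iff₀ (pow_pos hP1 2) (pow_pos hP2 2)]
  -- Cauchy–Schwarz: P(β₂)^2 ≤ P(2β₂-β₁) * P(β₁)
  have hCS : (∑ s ∈ S, (s:ℝ) ^ (-β₂)) ^ 2
      ≤ (∑ s ∈ S, (s:ℝ) ^ (-(2*β₂-β₁))) * (∑ s ∈ S, (s:ℝ) ^ (-β₁)) := by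
    have c1 : ∑ s ∈ S, (s:ℝ) ^ (-β₂)
        = ∑ s ∈ S, ((s:ℝ) ^ ((-(2*β₂-β₁))/2) * (s:ℝ) ^ ((-β₁)/2)) := by
      refine Finset.sum_congr rfl fun s hsm => ?_
      rw [← Real.rpow_add (pos_mem hsm)]; congr 1; ring
    have c2 : ∑ s ∈ S, ((s:ℝ) ^ ((-(2*β₂-β₁))/2)) ^ 2 = ∑ s ∈ S, (s:ℝ) ^ (-(2*β₂-β₁)) := by
      refine Finset.sum_congr rfl fun s hsm => ?_
      rw [sq, ← Real.rpow_add (pos_mem hsm)]; congr 1; ring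
    have c3 : ∑ s ∈ S, ((s:ℝ) ^ ((-β₁)/2)) ^ 2 = ∑ s ∈ S, (s:ℝ) ^ (-β₁) := by
      refine Finset.sum_congr rfl fun s hsm => ?_
      rw [sq, ← Real.rpow_add (pos_mem hsm)]; congr 1; ring
    rw [c1, ← c2, ← c3]
    exact Finset.sum_mul_sq_le_sq_mul_sq S _ _
  have hkey : (∑ s ∈ S, (s:ℝ) ^ (-(2*β₁))) * (∑ s ∈ S, (s:ℝ) ^ (-(2*β₂-β₁)))
      < (∑ s ∈ S, (s:ℝ) ^ (-β₁)) * (∑ s ∈ S, (s:ℝ) ^ (-(2*β₂))) :=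
    key smax hs hβ₁ (by linarith) (by linarith) (by ring)
  have hA : 0 < ∑ s ∈ S, (s:ℝ) ^ (-(2*β₁)) := Psum_pos smax hs (2*β₁)
  calc (∑ s ∈ S, (s:ℝ) ^ (-(2*β₁))) * (∑ s ∈ S, (s:ℝ) ^ (-β₂)) ^ 2
      ≤ (∑ s ∈ S, (s:ℝ) ^ (-(2*β₁))) * ((∑ s ∈ S, (s:ℝ) ^ (-(2*β₂-β₁))) * (∑ s ∈ S, (s:ℝ) ^ (-β₁))) :=
        mul_le_mul_of_nonneg_left hCS hA.le
    _ < ((∑ s ∈ S, (s:ℝ) ^ (-β₁)) * (∑ s ∈ S, (s:ℝ) ^ (-(2*β₂)))) * (∑ s ∈ S, (s:ℝ) ^ (-β₁)) := by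
        rw [← mul_assoc]
        exact mul_lt_mul_of_pos_right hkey hP1
    _ = (∑ s ∈ S, (s:ℝ) ^ (-(2*β₂))) * (∑ s ∈ S, (s:ℝ) ^ (-β₁)) ^ 2 := by ring
end

section
/- The squared 2-norm ‖g‖² of the truncated Zipf distribution with exponent β > 0 is strictly decreasing in s_max; i.e., for s_max' > s_max ≥ 1, (Σ_{s=1}^{s_max'} s^{−2β})/(Σ_{s=1}^{s_max'} s^{−β})² < (Σ_{s=1}^{s_max} s^{−2β})/(Σ_{s=1}^{s_max} s^{−β})². -/
open Finset

private lemma S1_pos (β : ℝ) (n : ℕ) (hn : 1 ≤ n) :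
    0 < ∑ s ∈ Finset.Icc 1 n, (s : ℝ) ^ (-β) := by
  apply Finset.sum_pos
  · intro s hs
    simp only [Finset.mem_Icc] at hs
    exact Real.rpow_pos_of_pos (by exact_mod_cast hs.1) _
  · exact ⟨1, Finset.mem_Icc.2 ⟨le_refl 1, hn⟩⟩

private lemma step_lemma (β : ℝ) (hβ : 0 < β) (n : ℕ) (hn : 1 ≤ n) :
    (∑ s ∈ Finset.Icc 1 (n+1), (s : ℝ) ^ (-(2 * β))) /
        (∑ s ∈ Finset.Icc 1 (n+1), (s : ℝ) ^ (-β)) ^ 2 <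
      (∑ s ∈ Finset.Icc 1 n, (s : ℝ) ^ (-(2 * β))) /
        (∑ s ∈ Finset.Icc 1 n, (s : ℝ) ^ (-β)) ^ 2 := by
  set A := ∑ s ∈ Finset.Icc 1 n, (s : ℝ) ^ (-(2 * β)) with hA
  set B := ∑ s ∈ Finset.Icc 1 n, (s : ℝ) ^ (-β) with hB
  set t := ((n+1 : ℕ) : ℝ) ^ (-β) with ht
  have hnpos : (0:ℝ) < (n+1 : ℕ) := by positivity
  have htpos : 0 < t := Real.rpow_pos_of_pos hnpos _
  have hBpos : 0 < B := S1_pos β n hn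
  have hsplit : Finset.Icc 1 (n+1) = insert (n+1) (Finset.Icc 1 n) := by
    ext x; simp [Finset.mem_Icc]; omega
  have hnotmem : (n+1) ∉ Finset.Icc 1 n := by simp
  have hS1 : ∑ s ∈ Finset.Icc 1 (n+1), (s : ℝ) ^ (-β) = B + t := by
    rw [hsplit, Finset.sum_insert hnotmem]; ring
  have hS2 : ∑ s ∈ Finset.Icc 1 (n+1), (s : ℝ) ^ (-(2 * β)) = A + t^2 := by
    rw [hsplit, Finset.sum_insert hnotmem]
    have : ((n+1 : ℕ) : ℝ) ^ (-(2 * β)) = t^2 := by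
      rw [ht, ← Real.rpow_natCast (((n+1:ℕ):ℝ) ^ (-β)) 2, ← Real.rpow_mul hnpos.le]
      norm_num; ring_nf
    rw [this]; ring
  -- key : A > B * t
  have hkey : B * t < A := by
    rw [hA, hB, Finset.sum_mul]
    apply Finset.sum_lt_sum_of_nonempty ⟨1, Finset.mem_Icc.2 ⟨le_refl 1, hn⟩⟩
    intro s hs
    simp only [Finset.mem_Icc] at hs
    have hspos : (0:ℝ) < s := by exact_mod_cast hs.1
    have h1 : t < (s : ℝ) ^ (-β) := by
      rw [ht]
      apply Real.rpow_lt_rpow_of_neg hspos (by exact_mod_cast Nat.lt_succ_of_le hs.2) (by linarith)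
    have h2 : (s : ℝ) ^ (-(2 * β)) = (s : ℝ) ^ (-β) * (s : ℝ) ^ (-β) := by
      rw [← Real.rpow_add hspos]; ring_nf
    rw [h2]
    have hsb : 0 < (s:ℝ) ^ (-β) := Real.rpow_pos_of_pos hspos _
    nlinarith
  rw [hS1, hS2]
  rw [div_lt_div_iff₀ (by positivity) (by positivity)]
  nlinarith [sq_nonneg t, sq_nonneg B, mul_pos hBpos htpos]

theorem stmt_15 (β : ℝ) (hβ : 0 < β) (smax smax' : ℕ)
    (hs : 1 ≤ smax) (hs' : smax < smax') :
    (∑ s ∈ Finset.Icc 1 smax', (s : ℝ) ^ (-(2 * β))) /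
        (∑ s ∈ Finset.Icc 1 smax', (s : ℝ) ^ (-β)) ^ 2 <
      (∑ s ∈ Finset.Icc 1 smax, (s : ℝ) ^ (-(2 * β))) /
        (∑ s ∈ Finset.Icc 1 smax, (s : ℝ) ^ (-β)) ^ 2 := by
  induction smax' with
  | zero => omega
  | succ m ih =>
    rcases Nat.lt_or_ge smax m with h | h
    · exact lt_trans (step_lemma β hβ m (by omega)) (ih h)
    · have : smax = m := by omega
      subst this
      exact step_lemma β hβ smax hs
end

section
/- (Shift reduces inner product for positive shifts in the supply-lead case) Let g(s) = c·s^{−β} on {1,…,s_max} and h_δ(s) = c'·(s−δ)^{−β} for δ < s ≤ s_max (zero for s ≤ δ), with c, c' normalizing constants, 0 ≤ δ < s_max, β > 0. Then Σ_s h_δ(s)·g(s) is strictly smaller than Σ_s h_0(s)·g(s) = Σ_s g(s)² whenever δ ≥ 1; i.e., a positive shift strictly decreases the control parameter π = N·k·ρ·Σ_s h(s)·g(s). -/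
open Finset

private noncomputable def ww (β : ℝ) (k : ℕ) : ℝ := (k:ℝ) ^ (-β)
private noncomputable def AA (β : ℝ) (k : ℕ) : ℝ := ∑ t ∈ Icc 1 k, ww β t

private lemma ww_pos {β : ℝ} {k : ℕ} (hk : 1 ≤ k) : 0 < ww β k :=
  Real.rpow_pos_of_pos (by exact_mod_cast hk) _

private lemma ww_anti {β : ℝ} (hβ : 0 < β) {k l : ℕ} (hk : 1 ≤ k) (hkl : k ≤ l) :
    ww β l ≤ ww β k :=
  Real.rpow_le_rpow_of_nonpos (by exact_mod_cast hk) (by exact_mod_cast hkl) (by linarith)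

private lemma ww_strict {β : ℝ} (hβ : 0 < β) {k l : ℕ} (hk : 1 ≤ k) (hkl : k < l) :
    ww β l < ww β k :=
  Real.rpow_lt_rpow_of_neg (by exact_mod_cast hk) (by exact_mod_cast hkl) (by linarith)

private lemma AA_zero {β : ℝ} : AA β 0 = 0 := by simp [AA]

private lemma AA_pos {β : ℝ} {k : ℕ} (hk : 1 ≤ k) : 0 < AA β k := by
  apply Finset.sum_pos
  · intro i hi; exact ww_pos (mem_Icc.mp hi).1
  · exact ⟨1, mem_Icc.mpr ⟨le_refl 1, hk⟩⟩

private lemma AA_nonneg {β : ℝ} (k : ℕ) : 0 ≤ AA β k := by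
  apply Finset.sum_nonneg
  intro i hi; exact (ww_pos (mem_Icc.mp hi).1).le

private lemma AA_mono {β : ℝ} {k l : ℕ} (hkl : k ≤ l) : AA β k ≤ AA β l := by
  apply Finset.sum_le_sum_of_subset_of_nonneg (Icc_subset_Icc_right hkl)
  intro i hi _; exact (ww_pos (mem_Icc.mp hi).1).le

private lemma AA_succ {β : ℝ} (k : ℕ) : AA β (k+1) = AA β k + ww β (k+1) := by
  rw [AA, AA, ← Finset.sum_Icc_succ_top (by omega : 1 ≤ k+1)]

private lemma AA_dom {β : ℝ} (hβ : 0 < β) (δ j : ℕ) (hj : 1 ≤ j) :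
    ∀ i, AA β j * AA β (j+i+δ) ≤ AA β (j+δ) * AA β (j+i) := by
  intro i
  induction i with
  | zero => simp [mul_comm]
  | succ i ih =>
    have step : AA β j * ww β (j+i+δ+1) ≤ AA β (j+δ) * ww β (j+i+1) := by
      apply mul_le_mul (AA_mono (by omega)) (ww_anti hβ (by omega) (by omega))
        (ww_pos (by omega)).le (AA_nonneg _)
    have h1 : AA β (j + (i+1) + δ) = AA β (j+i+δ) + ww β (j+i+δ+1) := by
      have := AA_succ (β := β) (j+i+δ); rw [← this]; ring_nf
    have h2 : AA β (j + (i+1)) = AA β (j+i) + ww β (j+i+1) := by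
      have := AA_succ (β := β) (j+i); rw [← this]; ring_nf
    rw [h1, h2, mul_add, mul_add]
    linarith

private lemma reindex {β : ℝ} (δ k : ℕ) :
    ∑ t ∈ Icc (δ+1) k, ww β (t-δ) = AA β (k-δ) := by
  rw [AA]
  apply Finset.sum_nbij' (fun t => t - δ) (fun u => u + δ)
  · intro a ha; simp only [mem_Icc] at *; omega
  · intro a ha; simp only [mem_Icc] at *; omega
  · intro a ha; simp only [mem_Icc] at ha; omega
  · intro a ha; simp only [mem_Icc] at ha; omega
  · intro a ha; rfl

private lemma tele (f : ℕ → ℝ) (n s : ℕ) (h1 : 1 ≤ n) (h2 : s ≤ n) :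
    ∑ k ∈ Icc s (n-1), (f k - f (k+1)) = f s - f n := by
  have h : Icc s (n-1) = Ico s n := by
    have := (Finset.Ico_add_one_right_eq_Icc s (n-1)).symm
    rwa [Nat.sub_add_cancel h1] at this
  rw [h, Finset.sum_Ico_eq_sum_range]
  have h3 := Finset.sum_range_sub' (fun i => f (s+i)) (n-s)
  rw [Nat.add_sub_cancel' h2] at h3
  simpa [add_assoc] using h3

private lemma swap_sum (u v : ℕ → ℝ) (N M : ℕ) (h : M ≤ N) :
    ∑ s ∈ Icc 1 N, u s * ∑ k ∈ Icc s M, v k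
      = ∑ k ∈ Icc 1 M, (∑ s ∈ Icc 1 k, u s) * v k := by
  have l1 : ∀ s ∈ Icc 1 N, u s * ∑ k ∈ Icc s M, v k
      = ∑ k ∈ Icc 1 M, (if s ≤ k then u s * v k else 0) := by
    intro s hs
    have hs1 : 1 ≤ s := (mem_Icc.mp hs).1
    rw [← Finset.sum_filter]
    have : (Icc 1 M).filter (fun k => s ≤ k) = Icc s M := by
      ext a; simp only [mem_filter, mem_Icc]; omega
    rw [this, Finset.mul_sum]
  rw [Finset.sum_congr rfl l1, Finset.sum_comm]
  refine Finset.sum_congr rfl (fun k hk => ?_)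
  have hk2 : k ≤ N := le_trans (mem_Icc.mp hk).2 h
  rw [← Finset.sum_filter]
  have : (Icc 1 N).filter (fun s => s ≤ k) = Icc 1 k := by
    ext a; simp only [mem_filter, mem_Icc]; omega
  rw [this, Finset.sum_mul]

private lemma abel_id {β : ℝ} (p : ℕ → ℝ) (n : ℕ) (hn : 1 ≤ n) :
    ∑ s ∈ Icc 1 n, p s * ww β s
      = (∑ s ∈ Icc 1 n, p s) * ww β n
        + ∑ k ∈ Icc 1 (n-1), (∑ s ∈ Icc 1 k, p s) * (ww β k - ww β (k+1)) := by
  have l1 : ∀ s ∈ Icc 1 n, p s * ww β s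
      = p s * ww β n + p s * ∑ k ∈ Icc s (n-1), (ww β k - ww β (k+1)) := by
    intro s hs
    rw [tele (ww β) n s hn (mem_Icc.mp hs).2]
    ring
  rw [Finset.sum_congr rfl l1, Finset.sum_add_distrib, ← Finset.sum_mul,
    swap_sum p (fun k => ww β k - ww β (k+1)) n (n-1) (by omega)]

theorem stmt_19 (smax δ : ℕ) (β : ℝ)
    (hs : 2 ≤ smax) (hδ1 : 1 ≤ δ) (hδ2 : δ < smax) (hβ : 0 < β) :
    (∑ s ∈ Finset.Icc 1 smax,
        (if δ < s then
            ((s - δ : ℕ) : ℝ) ^ (-β) /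
              ∑ t ∈ Finset.Icc (δ + 1) smax, ((t - δ : ℕ) : ℝ) ^ (-β)
          else 0) *
          ((s : ℝ) ^ (-β) / ∑ t ∈ Finset.Icc 1 smax, (t : ℝ) ^ (-β))) <
      ∑ s ∈ Finset.Icc 1 smax,
        ((s : ℝ) ^ (-β) / ∑ t ∈ Finset.Icc 1 smax, (t : ℝ) ^ (-β)) ^ 2 := by
  set n := smax with hn
  set m := n - δ with hm
  have hm1 : 1 ≤ m := by omega
  have hmδ : m + δ = n := by omega
  have hAn : 0 < AA β n := AA_pos (by omega)
  have hAm : 0 < AA β m := AA_pos hm1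
  -- identify denominators
  have hD : ∑ t ∈ Icc (δ + 1) n, ((t - δ : ℕ) : ℝ) ^ (-β) = AA β m := by
    have := reindex (β := β) δ n
    simpa [ww, hm] using this
  have hG : ∑ t ∈ Icc 1 n, (t : ℝ) ^ (-β) = AA β n := rfl
  rw [hD, hG]
  -- define the weight functions
  set p : ℕ → ℝ := fun s => if δ < s then ww β (s - δ) / AA β m else 0 with hp
  set q : ℕ → ℝ := fun s => ww β s / AA β n with hq
  have hgoal1 : ∀ s ∈ Icc 1 n,
      (if δ < s then ((s - δ : ℕ) : ℝ) ^ (-β) / AA β m else 0) * ((s:ℝ) ^ (-β) / AA β n)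
        = p s * ww β s / AA β n := by
    intro s hs
    simp only [hp, ww]
    split <;> ring
  have hgoal2 : ∀ s ∈ Icc 1 n,
      ((s:ℝ) ^ (-β) / AA β n) ^ 2 = q s * ww β s / AA β n := by
    intro s hs
    simp only [hq, ww]; ring
  rw [Finset.sum_congr rfl hgoal1, Finset.sum_congr rfl hgoal2,
    ← Finset.sum_div, ← Finset.sum_div, div_lt_div_iff_of_pos_right hAn]
  -- partial sums
  have hPsum : ∀ k, ∑ s ∈ Icc 1 k, p s = AA β (k - δ) / AA β m := by
    intro k
    have : ∑ s ∈ Icc 1 k, p s = ∑ s ∈ (Icc 1 k).filter (fun s => δ < s), ww β (s-δ) / AA β m := by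
      rw [Finset.sum_filter]
    rw [this]
    have hf : (Icc 1 k).filter (fun s => δ < s) = Icc (δ+1) k := by
      ext a; simp only [mem_filter, mem_Icc]; omega
    rw [hf, ← Finset.sum_div, reindex]
  have hQsum : ∀ k, ∑ s ∈ Icc 1 k, q s = AA β k / AA β n := by
    intro k
    rw [hq, ← Finset.sum_div]; rfl
  have hPtot : ∑ s ∈ Icc 1 n, p s = 1 := by
    rw [hPsum, ← hm, div_self hAm.ne']
  have hQtot : ∑ s ∈ Icc 1 n, q s = 1 := by
    rw [hQsum, div_self hAn.ne']
  rw [abel_id p n (by omega), abel_id q n (by omega), hPtot, hQtot]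
  have key : ∑ k ∈ Icc 1 (n-1), (∑ s ∈ Icc 1 k, p s) * (ww β k - ww β (k+1))
      < ∑ k ∈ Icc 1 (n-1), (∑ s ∈ Icc 1 k, q s) * (ww β k - ww β (k+1)) := by
    apply Finset.sum_lt_sum
    · intro k hk
      obtain ⟨hk1, hk2⟩ := mem_Icc.mp hk
      rw [hPsum, hQsum]
      apply mul_le_mul_of_nonneg_right _ (sub_nonneg.mpr (ww_anti hβ hk1 (by omega)))
      rcases Nat.lt_or_ge δ k with h | h
      · have hj1 : 1 ≤ k - δ := by omega
        have hjm : k - δ ≤ m := by omega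
        rw [div_le_div_iff₀ hAm hAn]
        have := AA_dom hβ δ (k - δ) hj1 (m - (k - δ))
        have e1 : k - δ + (m - (k - δ)) = m := by omega
        have e2 : k - δ + (m - (k - δ)) + δ = n := by omega
        have e3 : k - δ + δ = k := by omega
        rw [e1, hmδ, e3] at this
        linarith
      · have : k - δ = 0 := by omega
        rw [this, AA_zero, zero_div]
        exact div_nonneg (AA_nonneg _) hAn.le
    · refine ⟨δ, mem_Icc.mpr ⟨hδ1, by omega⟩, ?_⟩
      rw [hPsum, hQsum, Nat.sub_self, AA_zero, zero_div, zero_mul]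
      apply mul_pos (div_pos (AA_pos hδ1) hAn)
      exact sub_pos.mpr (ww_strict hβ hδ1 (by omega))
  linarith
end
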